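/- Let f, f†, f‡ be probability density functions on ℝ with f(y) = q·f†(y) + (1−q)·f‡(y) for some q ∈ (0,1), and let y_q satisfy ∫_{−∞}^{y_q} f(y) dy = q. Then (1/q)·∫_{−∞}^{y_q} y·f(y) dy ≤ ∫ y·f†(y) dy. -/
import Mathlib


open MeasureTheory Set

/-- Lower-trimming half of Lee's (2002) trimming lemma. -/
theorem lee_trimming_lower
    (f fdag fddag : ℝ → ℝ) (q yq : ℝ)
    (hq : q ∈ Set.Ioo (0:ℝ) 1)
    (hf_nonneg : ∀ y, 0 ≤ f y) (hfdag_nonneg : ∀ y, 0 ≤ fdag y)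
    (hfddag_nonneg : ∀ y, 0 ≤ fddag y)
    (hf_int : Integrable f) (hfdag_int : Integrable fdag) (hfddag_int : Integrable fddag)
    (hf_mass : ∫ y, f y = 1) (hfdag_mass : ∫ y, fdag y = 1)
    (hfddag_mass : ∫ y, fddag y = 1)
    (hf_mom : Integrable (fun y => y * f y))
    (hfdag_mom : Integrable (fun y => y * fdag y))
    (hfddag_mom : Integrable (fun y => y * fddag y))
    (hmix : ∀ y, f y = q * fdag y + (1 - q) * fddag y)
    (hquant : ∫ y in Set.Iic yq, f y = q) :
    (1 / q) * ∫ y in Set.Iic yq, y * f y ≤ ∫ y, y * fdag y := by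
  obtain ⟨hq0, hq1⟩ := hq
  have hms : MeasurableSet (Set.Iic yq) := measurableSet_Iic
  -- split masses
  have hdag_split : (∫ y in Set.Iic yq, fdag y) + (∫ y in Set.Ioi yq, fdag y) = 1 := by
    rw [intervalIntegral.integral_Iic_add_Ioi hfdag_int.integrableOn hfdag_int.integrableOn, hfdag_mass]
  -- quantile equation in terms of components
  have hquant' : q * (∫ y in Set.Iic yq, fdag y) + (1 - q) * (∫ y in Set.Iic yq, fddag y) = q := by
    have hcomp : (∫ y in Set.Iic yq, f y)
        = q * (∫ y in Set.Iic yq, fdag y) + (1 - q) * (∫ y in Set.Iic yq, fddag y) := by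
      rw [show (∫ y in Set.Iic yq, f y)
          = ∫ y in Set.Iic yq, (q * fdag y + (1 - q) * fddag y) from
        integral_congr_ae (Filter.Eventually.of_forall fun y => hmix y)]
      rw [integral_add (hfdag_int.integrableOn.const_mul q)
        (hfddag_int.integrableOn.const_mul (1 - q)),
        integral_const_mul, integral_const_mul]
    rw [← hcomp]; exact hquant
  -- key balance: q * ∫_{Ioi} fdag = (1-q) * ∫_{Iic} fddag
  have hbal : q * (∫ y in Set.Ioi yq, fdag y) = (1 - q) * (∫ y in Set.Iic yq, fddag y) := by
    nlinarith [hdag_split, hquant']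
  -- inequality on Iic for fddag
  have h1 : (∫ y in Set.Iic yq, y * fddag y) ≤ yq * (∫ y in Set.Iic yq, fddag y) := by
    rw [← integral_const_mul]
    refine setIntegral_mono_on hfddag_mom.integrableOn
      (hfddag_int.integrableOn.const_mul yq) hms ?_
    intro x hx
    exact mul_le_mul_of_nonneg_right (mem_Iic.mp hx) (hfddag_nonneg x)
  -- inequality on Ioi for fdag
  have h2 : yq * (∫ y in Set.Ioi yq, fdag y) ≤ ∫ y in Set.Ioi yq, y * fdag y := by
    rw [← integral_const_mul]
    refine setIntegral_mono_on (hfdag_int.integrableOn.const_mul yq)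
      hfdag_mom.integrableOn measurableSet_Ioi ?_
    intro x hx
    exact mul_le_mul_of_nonneg_right (le_of_lt (mem_Ioi.mp hx)) (hfdag_nonneg x)
  -- split the moment of fdag
  have hmom_split : (∫ y in Set.Iic yq, y * fdag y) + (∫ y in Set.Ioi yq, y * fdag y)
      = ∫ y, y * fdag y := intervalIntegral.integral_Iic_add_Ioi hfdag_mom.integrableOn hfdag_mom.integrableOn
  -- expand truncated moment of f
  have hfsplit : (∫ y in Set.Iic yq, y * f y)
      = q * (∫ y in Set.Iic yq, y * fdag y) + (1 - q) * (∫ y in Set.Iic yq, y * fddag y) := by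
    rw [show (∫ y in Set.Iic yq, y * f y)
        = ∫ y in Set.Iic yq, (q * (y * fdag y) + (1 - q) * (y * fddag y)) from
      integral_congr_ae (Filter.Eventually.of_forall fun y => by simp only []; rw [hmix y]; ring)]
    rw [integral_add (hfdag_mom.integrableOn.const_mul q)
      (hfddag_mom.integrableOn.const_mul (1 - q)),
      integral_const_mul, integral_const_mul]
  -- conclude
  rw [one_div, inv_mul_le_iff₀ hq0]
  calc (∫ y in Set.Iic yq, y * f y)
      = q * (∫ y in Set.Iic yq, y * fdag y) + (1 - q) * (∫ y in Set.Iic yq, y * fddag y) :=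
        hfsplit
    _ ≤ q * (∫ y in Set.Iic yq, y * fdag y) + (1 - q) * (yq * (∫ y in Set.Iic yq, fddag y)) := by
        have := mul_le_mul_of_nonneg_left h1 (by linarith : (0:ℝ) ≤ 1 - q)
        linarith
    _ = q * (∫ y in Set.Iic yq, y * fdag y) + yq * (q * (∫ y in Set.Ioi yq, fdag y)) := by
        rw [hbal]; ring
    _ ≤ q * (∫ y in Set.Iic yq, y * fdag y) + q * (∫ y in Set.Ioi yq, y * fdag y) := by
        have := mul_le_mul_of_nonneg_left h2 (le_of_lt hq0)
        nlinarith
    _ = q * ∫ y, y * fdag y := by rw [← hmom_split]; ring
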